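/- Let R be a valuation domain. The following are equivalent: (1) R_L is countably generated as an R-module for each prime ideal L; (2) for each prime ideal L which is the intersection of the set of primes properly containing L, there is a countable subset of that set whose intersection is L; (3) for each prime ideal L, the quotient field of R/L is countably generated as an R/L-module. -/

import Mathlib

open Pointwise

section Defs
universe u v
variable (R : Type u) [CommRing R]

/-- `U` is a pure submodule of its ambient module: `rU = U ∩ rM` for all `r`. -/
def IsPureSub {M : Type v} [AddCommGroup M] [Module R M] (U : Submodule R M) : Prop :=
  ∀ (r : R) (x : M), x ∈ U → (∃ m : M, r • m = x) → ∃ u ∈ U, r • u = x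

/-- `U` is uniserial: its submodules are totally ordered by inclusion. -/
def IsUniserialSub {M : Type v} [AddCommGroup M] [Module R M] (U : Submodule R M) : Prop :=
  ∀ A B : Submodule R ↥U, A ≤ B ∨ B ≤ A

/-- `U` is a direct summand of its ambient module. -/
def IsSummand {M : Type v} [AddCommGroup M] [Module R M] (U : Submodule R M) : Prop :=
  ∃ V : Submodule R M, IsCompl U V

/-- A (torsion-free) module is separable if every pure uniserial submodule is a summand. -/
def IsSeparableMod (M : Type v) [AddCommGroup M] [Module R M] : Prop :=
  ∀ U : Submodule R M, IsPureSub R U → IsUniserialSub R U → IsSummand R U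

/-- `R/A` is complete in the `R/A`-topology: every coherent family of cosets
`(aᵢ + Bᵢ)` with `⋂ᵢ Bᵢ = A` has a common point. -/
def IsCompleteQuot (A : Ideal R) : Prop :=
  ∀ (ι : Type u) (a : ι → R) (B : ι → Ideal R),
    (∀ i, A ≤ B i) → (∀ i j, B i ≤ B j → a i - a j ∈ B j) → (⨅ i, B i) = A →
    ∃ c : R, ∀ i, c - a i ∈ B i

/-- A valuation ring with maximal ideal `P` is maximal: `R/A` is complete in the
`R/A`-topology for every proper ideal `A` with `A ≠ Pa` for all nonzero `a`. -/
def IsMaximalVD (P : Ideal R) : Prop :=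
  ∀ A : Ideal R, A ≠ ⊤ → (∀ a : R, a ≠ 0 → A ≠ Ideal.span {a} * P) → IsCompleteQuot R A

/-- A module `M` is slender if every homomorphism `R^ℕ → M` kills almost all
standard unit vectors. -/
def IsSlender (M : Type v) [AddCommGroup M] [Module R M] : Prop :=
  ∀ f : ((ℕ → R) →ₗ[R] M), ∃ n₀ : ℕ, ∀ n ≥ n₀, f (Pi.single n 1) = 0

end Defs

section Aux

variable {A : Type*} [CommRing A] [IsDomain A] [ValuationRing A]

theorem aux_loc_span_iff (M : Submonoid A) (hM : M ≤ nonZeroDivisors A) :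
    (∃ S : Set (Localization M), S.Countable ∧ Submodule.span A S = ⊤) ↔
    (∃ T : Set A, T.Countable ∧ (∀ t ∈ T, t ∈ M) ∧ ∀ m ∈ M, ∃ t ∈ T, m ∣ t) := by
  have hinj := IsLocalization.injective (Localization M) hM
  haveI : Nontrivial (Localization M) :=
    ⟨⟨0, 1, fun h => zero_ne_one (hinj (by rw [map_zero, map_one, h]))⟩⟩
  have key : ∀ s t : M, (s : A) ∣ (t : A) →
      Submodule.span A {IsLocalization.mk' (Localization M) (1 : A) s} ≤
      Submodule.span A {IsLocalization.mk' (Localization M) (1 : A) t} := by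
    rintro s t ⟨c, hc⟩
    rw [Submodule.span_le, Set.singleton_subset_iff]
    refine Submodule.mem_span_singleton.2 ⟨c, ?_⟩
    rw [IsLocalization.smul_mk'_one, IsLocalization.mk'_eq_iff_eq]
    congr 1
    rw [mul_one, hc]
  constructor
  · rintro ⟨S, hSc, hSspan⟩
    choose num den hrep using fun x : Localization M =>
      show ∃ (a : A) (s : M), IsLocalization.mk' (Localization M) a s = x from by
      obtain ⟨⟨a, s⟩, h⟩ := IsLocalization.mk'_surjective M x; exact ⟨a, s, h⟩
    refine ⟨(fun x : Localization M => (den x : A)) '' S, hSc.image _, ?_, ?_⟩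
    · rintro t ⟨x, _, rfl⟩; exact (den x).2
    intro m hm
    have hmem : IsLocalization.mk' (Localization M) (1 : A) ⟨m, hm⟩ ∈ Submodule.span A S := by
      rw [hSspan]; trivial
    haveI : Nonempty S := by
      rcases Set.eq_empty_or_nonempty S with h | h
      · rw [h, Submodule.span_empty, Submodule.mem_bot] at hmem
        exfalso
        have := congrArg (· * (algebraMap A (Localization M)) m) hmem
        simp only [zero_mul] at this
        rw [IsLocalization.mk'_spec_mk] at this
        exact one_ne_zero (hinj (this.trans (map_zero _).symm))
      · exact ⟨⟨h.choose, h.choose_spec⟩⟩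
    have hdir : Directed (· ≤ ·) (fun x : S =>
        Submodule.span A {IsLocalization.mk' (Localization M) (1 : A) (den ↑x)}) := by
      intro x y
      rcases ValuationRing.dvd_total (den (x : Localization M) : A) (den (y : Localization M) : A)
        with h | h
      · exact ⟨y, key _ _ h, le_rfl⟩
      · exact ⟨x, le_rfl, key _ _ h⟩
    have hsub : Submodule.span A S ≤ ⨆ x : S,
        Submodule.span A {IsLocalization.mk' (Localization M) (1 : A) (den ↑x)} := by
      rw [Submodule.span_le]
      intro y hy
      refine Submodule.mem_iSup_of_mem ⟨y, hy⟩ ?_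
      refine Submodule.mem_span_singleton.2 ⟨num y, ?_⟩
      rw [IsLocalization.smul_mk'_one, hrep]
    obtain ⟨x, hx⟩ := (Submodule.mem_iSup_of_directed _ hdir).1 (hsub hmem)
    obtain ⟨r, hr⟩ := Submodule.mem_span_singleton.1 hx
    rw [IsLocalization.smul_mk'_one, IsLocalization.mk'_eq_iff_eq] at hr
    have h2 : m * r = (den (x : Localization M) : A) := by simpa using hinj hr
    exact ⟨(den (x : Localization M) : A), ⟨↑x, x.2, rfl⟩, ⟨r, h2.symm⟩⟩
  · rintro ⟨T, hTc, hTM, hTcof⟩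
    refine ⟨(fun t : M => IsLocalization.mk' (Localization M) (1 : A) t) '' {t : M | (t : A) ∈ T},
      ((hTc.preimage Subtype.val_injective).image _), ?_⟩
    rw [Submodule.eq_top_iff']
    intro x
    obtain ⟨⟨a, s⟩, rfl⟩ := IsLocalization.mk'_surjective M x
    dsimp only
    obtain ⟨t, htT, c, hc⟩ := hTcof s s.2
    have tM : t ∈ M := hTM t htT
    have hx : IsLocalization.mk' (Localization M) a s =
        (a * c) • IsLocalization.mk' (Localization M) (1 : A) (⟨t, tM⟩ : M) := by
      rw [IsLocalization.smul_mk'_one, IsLocalization.mk'_eq_iff_eq]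
      congr 1
      show t * a = ↑s * (a * c)
      rw [hc]; ring
    rw [hx]
    exact Submodule.smul_mem _ _ (Submodule.subset_span ⟨⟨t, tM⟩, htT, rfl⟩)

end Aux

section Aux2

variable {R : Type u} [CommRing R] [IsDomain R] [ValuationRing R]

/-- Auxiliary condition: every prime has a countable dvd-cofinal set in its complement. -/
def VCond (R : Type u) [CommRing R] : Prop :=
  ∀ L : Ideal R, L.IsPrime →
    ∃ T : Set R, T.Countable ∧ (∀ t ∈ T, t ∉ L) ∧ ∀ s ∉ L, ∃ t ∈ T, s ∣ t

instance quot_valuationRing (L : Ideal R) [L.IsPrime] : ValuationRing (R ⧸ L) := by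
  haveI : PreValuationRing (R ⧸ L) := ⟨fun a b => ?_⟩
  · exact ⟨⟩
  obtain ⟨a, rfl⟩ := Ideal.Quotient.mk_surjective a
  obtain ⟨b, rfl⟩ := Ideal.Quotient.mk_surjective b
  obtain ⟨c, h | h⟩ := ValuationRing.cond a b
  · exact ⟨Ideal.Quotient.mk L c, Or.inl (by rw [← map_mul, h])⟩
  · exact ⟨Ideal.Quotient.mk L c, Or.inr (by rw [← map_mul, h])⟩

theorem loc_iff_vcond :
    (∀ (L : Ideal R) [L.IsPrime],
        ∃ S : Set (Localization.AtPrime L), S.Countable ∧ Submodule.span R S = ⊤) ↔ VCond R := by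
  have hcompl : ∀ (L : Ideal R) [L.IsPrime], L.primeCompl ≤ nonZeroDivisors R := fun L _ t ht =>
    mem_nonZeroDivisors_of_ne_zero (fun h0 => ht (h0 ▸ L.zero_mem))
  constructor
  · intro h L hL
    haveI := hL
    obtain ⟨T, h1, h2, h3⟩ := (aux_loc_span_iff L.primeCompl (hcompl L)).1 (h L)
    exact ⟨T, h1, h2, h3⟩
  · intro h L hL
    obtain ⟨T, h1, h2, h3⟩ := h L hL
    exact (aux_loc_span_iff L.primeCompl (hcompl L)).2 ⟨T, h1, h2, h3⟩

theorem quot_cond_iff (L : Ideal R) (hL : L.IsPrime) :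
    (∃ T : Set (R ⧸ L), T.Countable ∧ (∀ t ∈ T, t ∈ nonZeroDivisors (R ⧸ L)) ∧
      ∀ m ∈ nonZeroDivisors (R ⧸ L), ∃ t ∈ T, m ∣ t) ↔
    (∃ T : Set R, T.Countable ∧ (∀ t ∈ T, t ∉ L) ∧ ∀ s ∉ L, ∃ t ∈ T, s ∣ t) := by
  haveI := hL
  constructor
  · rintro ⟨T, h1, h2, h3⟩
    choose f hf using Ideal.Quotient.mk_surjective (I := L)
    refine ⟨f '' T, h1.image _, ?_, ?_⟩
    · rintro t ⟨u, hu, rfl⟩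
      intro hfL
      have : u = 0 := by rw [← hf u, Ideal.Quotient.eq_zero_iff_mem]; exact hfL
      exact (mem_nonZeroDivisors_iff_ne_zero.1 (h2 u hu)) this
    · intro s hs
      have hs0 : Ideal.Quotient.mk L s ≠ 0 := fun h0 => hs (Ideal.Quotient.eq_zero_iff_mem.1 h0)
      obtain ⟨u, hu, r, hr⟩ := h3 _ (mem_nonZeroDivisors_iff_ne_zero.2 hs0)
      obtain ⟨r, rfl⟩ := Ideal.Quotient.mk_surjective r
      -- hr : u = mk s * mk r
      have hfu : f u - s * r ∈ L := by
        rw [← Ideal.Quotient.eq_zero_iff_mem, map_sub, hf u, hr, map_mul]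
        ring
      set l := f u - s * r with hl
      have hfuL : f u ∉ L := by
        intro hmem
        have : u = 0 := by rw [← hf u, Ideal.Quotient.eq_zero_iff_mem]; exact hmem
        exact (mem_nonZeroDivisors_iff_ne_zero.1 (h2 u hu)) this
      have hlt : l ∈ Ideal.span {f u} := by
        rcases Std.Total.total (r := (· ≤ · : Ideal R → Ideal R → Prop))
          (Ideal.span {f u}) (Ideal.span {l}) with hle | hle
        · exfalso
          apply hfuL
          have : f u ∈ Ideal.span {l} := hle (Ideal.subset_span rfl)
          obtain ⟨m, hm⟩ := Ideal.mem_span_singleton'.1 this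
          rw [← hm]
          exact L.mul_mem_left m hfu
        · exact hle (Ideal.subset_span rfl)
      obtain ⟨m, hm⟩ := Ideal.mem_span_singleton'.1 hlt
      -- hm : m * f u = l
      have hmL : m ∈ L := by
        rcases hL.mem_or_mem (hm.symm ▸ hfu : m * f u ∈ L) with h | h
        · exact h
        · exact absurd h hfuL
      have hunit : IsUnit (1 - m) :=
        IsLocalRing.isUnit_one_sub_self_of_mem_nonunits m
          (fun hu' => hL.ne_top (Ideal.eq_top_of_isUnit_mem L hmL hu'))
      obtain ⟨v, hv⟩ := hunit
      refine ⟨f u, ⟨u, hu, rfl⟩, ⟨r * ↑v⁻¹, ?_⟩⟩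
      -- f u = s * (r * v⁻¹); from f u * (1 - m) = s * r
      have hkey : f u * (1 - m) = s * r := by
        rw [mul_sub, mul_one, mul_comm (f u) m, hm, hl]; ring
      calc f u = f u * (1 - m) * ↑v⁻¹ := by
            rw [← hv]
            rw [mul_assoc]
            simp
        _ = s * (r * ↑v⁻¹) := by rw [hkey]; ring
  · rintro ⟨T, h1, h2, h3⟩
    refine ⟨(Ideal.Quotient.mk L) '' T, h1.image _, ?_, ?_⟩
    · rintro t ⟨u, hu, rfl⟩
      exact mem_nonZeroDivisors_iff_ne_zero.2
        (fun h0 => h2 u hu (Ideal.Quotient.eq_zero_iff_mem.1 h0))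
    · intro m hm
      obtain ⟨s, rfl⟩ := Ideal.Quotient.mk_surjective m
      have hs : s ∉ L := fun hsL => (mem_nonZeroDivisors_iff_ne_zero.1 hm)
        (Ideal.Quotient.eq_zero_iff_mem.2 hsL)
      obtain ⟨t, ht, hdvd⟩ := h3 s hs
      exact ⟨Ideal.Quotient.mk L t, ⟨t, ht, rfl⟩, map_dvd _ hdvd⟩

theorem frac_iff_vcond :
    (∀ L : Ideal R, L.IsPrime →
        ∃ S : Set (FractionRing (R ⧸ L)), S.Countable ∧ Submodule.span (R ⧸ L) S = ⊤) ↔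
      VCond R := by
  constructor
  · intro h L hL
    haveI := hL
    exact (quot_cond_iff L hL).1
      ((aux_loc_span_iff (nonZeroDivisors (R ⧸ L)) le_rfl).1 (h L hL))
  · intro h L hL
    haveI := hL
    exact (aux_loc_span_iff (nonZeroDivisors (R ⧸ L)) le_rfl).2
      ((quot_cond_iff L hL).2 (h L hL))

end Aux2

section Aux3

variable {R : Type u} [CommRing R] [IsDomain R] [ValuationRing R]

theorem vcond_iff_inter :
    VCond R ↔
      (∀ L : Ideal R, L.IsPrime →
        sInf {P : Ideal R | P.IsPrime ∧ L < P} = L →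
        ∃ S : Set (Ideal R), S.Countable ∧ S ⊆ {P : Ideal R | P.IsPrime ∧ L < P} ∧
          sInf S = L) := by
  constructor
  · intro h L hL hinf
    obtain ⟨T, h1, h2, h3⟩ := h L hL
    have hex : ∀ t : T, ∃ P : Ideal R, (P.IsPrime ∧ L < P) ∧ (t : R) ∉ P := by
      rintro ⟨t, ht⟩
      have : t ∉ sInf {P : Ideal R | P.IsPrime ∧ L < P} := by rw [hinf]; exact h2 t ht
      rw [Submodule.mem_sInf] at this
      push_neg at this
      obtain ⟨P, hP, hnot⟩ := this
      exact ⟨P, hP, hnot⟩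
    choose g hg using hex
    haveI : Countable T := Set.countable_coe_iff.2 h1
    refine ⟨Set.range g, Set.countable_range g, ?_, ?_⟩
    · rintro P ⟨t, rfl⟩
      exact (hg t).1
    · apply le_antisymm
      · intro x hx
        by_contra hxL
        obtain ⟨t, ht, c, hc⟩ := h3 x hxL
        have hxP : x ∈ g ⟨t, ht⟩ := Submodule.mem_sInf.1 hx _ ⟨⟨t, ht⟩, rfl⟩
        have hmul := Ideal.mul_mem_right c _ hxP
        rw [← hc] at hmul
        exact (hg ⟨t, ht⟩).2 hmul
      · intro x hx
        rw [Submodule.mem_sInf]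
        rintro P ⟨t, rfl⟩
        exact le_of_lt (hg t).1.2 hx
  · intro h L hL
    by_cases hempty : {P : Ideal R | P.IsPrime ∧ L < P} = ∅
    · -- L is the maximal ideal; units are cofinal
      have hLmax : L = IsLocalRing.maximalIdeal R := by
        rcases lt_or_eq_of_le (IsLocalRing.le_maximalIdeal hL.ne_top) with hlt | heq
        · exfalso
          have hmem : IsLocalRing.maximalIdeal R ∈ {P : Ideal R | P.IsPrime ∧ L < P} :=
            ⟨(IsLocalRing.maximalIdeal.isMaximal R).isPrime, hlt⟩
          rw [hempty] at hmem
          exact Set.notMem_empty _ hmem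
        · exact heq
      refine ⟨{1}, Set.countable_singleton 1, ?_, ?_⟩
      · rintro t rfl
        exact fun h1 => hL.ne_top (Ideal.eq_top_of_isUnit_mem L h1 isUnit_one)
      · intro s hs
        refine ⟨1, rfl, isUnit_iff_dvd_one.1 ?_⟩
        by_contra hu
        exact hs (by rw [hLmax]; exact hu)
    · by_cases hinf : sInf {P : Ideal R | P.IsPrime ∧ L < P} = L
      · obtain ⟨S, h1, h2, h3⟩ := h L hL hinf
        have hex : ∀ P : S, ∃ s : R, s ∈ (P : Ideal R) ∧ s ∉ L := by
          rintro ⟨P, hP⟩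
          obtain ⟨x, hx1, hx2⟩ := SetLike.exists_of_lt (h2 hP).2
          exact ⟨x, hx1, hx2⟩
        choose f hf using hex
        haveI : Countable S := Set.countable_coe_iff.2 h1
        refine ⟨Set.range f, Set.countable_range f, ?_, ?_⟩
        · rintro t ⟨P, rfl⟩
          exact (hf P).2
        · intro s hs
          have : s ∉ sInf S := h3 ▸ hs
          rw [Submodule.mem_sInf] at this
          push_neg at this
          obtain ⟨P, hPS, hsP⟩ := this
          refine ⟨f ⟨P, hPS⟩, ⟨⟨P, hPS⟩, rfl⟩, ?_⟩
          rcases ValuationRing.dvd_total s (f ⟨P, hPS⟩) with hd | hd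
          · exact hd
          · exact absurd (hd.elim (fun c hc => hc ▸ Ideal.mul_mem_right c _ (hf ⟨P, hPS⟩).1)) hsP
      · -- sInf of primes above L is strictly bigger than L
        have hle : L ≤ sInf {P : Ideal R | P.IsPrime ∧ L < P} := by
          rw [le_sInf_iff]
          rintro P ⟨_, hP⟩
          exact le_of_lt hP
        obtain ⟨s, hs1, hs2⟩ := SetLike.exists_of_lt (lt_of_le_of_ne hle (Ne.symm hinf))
        obtain ⟨P0, hP0⟩ := Set.nonempty_iff_ne_empty.2 hempty
        have hs0 : s ≠ 0 := fun h0 => hs2 (h0 ▸ L.zero_mem)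
        have hsnu : ¬IsUnit s := by
          intro hu
          have hsP0 : s ∈ P0 := Submodule.mem_sInf.1 hs1 P0 hP0
          exact hP0.1.ne_top (Ideal.eq_top_of_isUnit_mem P0 hsP0 hu)
        refine ⟨Set.range (fun n : ℕ => s ^ n), Set.countable_range _, ?_, ?_⟩
        · rintro t ⟨n, rfl⟩
          exact fun hmem => hs2 (hL.mem_of_pow_mem n hmem)
        · intro t htL
          by_contra hnot
          push_neg at hnot
          have hdvd : ∀ n : ℕ, s ^ n ∣ t := by
            intro n
            rcases ValuationRing.dvd_total (s ^ n) t with hd | hd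
            · exact hd
            · exact absurd hd (fun hd' => hnot (s ^ n) ⟨n, rfl⟩ hd')
          set J : Ideal R := ⨅ n : ℕ, Ideal.span {s ^ n} with hJ
          have hmemJ : ∀ x : R, x ∈ J ↔ ∀ n : ℕ, s ^ n ∣ x := by
            intro x
            simp [hJ, Ideal.mem_iInf, Ideal.mem_span_singleton]
          have hsu : ∀ c : R, s * c ≠ 1 := fun c hc => hsnu (IsUnit.of_mul_eq_one c hc)
          have hJprime : J.IsPrime := by
            constructor
            · intro htop
              have : (1 : R) ∈ J := htop ▸ Submodule.mem_top
              obtain ⟨c, hc⟩ := (hmemJ 1).1 this 1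
              rw [pow_one] at hc
              exact hsu c hc.symm
            · intro x y hxy
              by_contra hcon
              push_neg at hcon
              obtain ⟨hx, hy⟩ := hcon
              obtain ⟨n, hn⟩ := not_forall.1 ((hmemJ x).not.1 hx)
              obtain ⟨k, hk⟩ := not_forall.1 ((hmemJ y).not.1 hy)
              have hxd : x ∣ s ^ n := (ValuationRing.dvd_total x (s ^ n)).resolve_right hn
              have hyd : y ∣ s ^ k := (ValuationRing.dvd_total y (s ^ k)).resolve_right hk
              have h1 : s ^ (n + k + 1) ∣ x * y := (hmemJ (x * y)).1 hxy (n + k + 1)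
              have h2 : x * y ∣ s ^ (n + k) := by rw [pow_add]; exact mul_dvd_mul hxd hyd
              obtain ⟨c, hc⟩ := h1.trans h2
              have hc' : s ^ (n + k) * 1 = s ^ (n + k) * (s * c) := by
                rw [mul_one]; nth_rewrite 1 [hc]; rw [pow_succ]; ring
              exact hsu c (mul_left_cancel₀ (pow_ne_zero _ hs0) hc').symm
          have hLJ : L ≤ J := by
            intro x hxL
            rw [hmemJ]
            intro n
            rcases ValuationRing.dvd_total (s ^ n) x with hd | hd
            · exact hd
            · exact absurd (hd.elim (fun c hc => hL.mem_of_pow_mem n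
                (hc ▸ Ideal.mul_mem_right c _ hxL))) hs2
          have htJ : t ∈ J := (hmemJ t).2 hdvd
          have hLJlt : L < J := lt_of_le_of_ne hLJ (fun he => htL (he ▸ htJ))
          have hsJ : s ∈ J := Submodule.mem_sInf.1 hs1 J ⟨hJprime, hLJlt⟩
          obtain ⟨c, hc⟩ := (hmemJ s).1 hsJ 2
          have hc' : s * 1 = s * (s * c) := by
            rw [mul_one]; nth_rewrite 1 [hc]; ring
          exact hsu c (mul_left_cancel₀ hs0 hc').symm

end Aux3


/-- equivalence of: (1) `R_L` countably generated over `R` for each prime `L`;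
(2) each prime `L` which is the intersection of the primes properly containing it is a
countable such intersection; (3) the quotient field of `R/L` is countably generated over
`R/L` for each prime `L`. -/
theorem stmt_9 {R : Type u} [CommRing R] [IsDomain R] [ValuationRing R] :
    ((∀ (L : Ideal R) [L.IsPrime],
        ∃ S : Set (Localization.AtPrime L), S.Countable ∧ Submodule.span R S = ⊤) ↔
      (∀ L : Ideal R, L.IsPrime →
        sInf {P : Ideal R | P.IsPrime ∧ L < P} = L →
        ∃ S : Set (Ideal R), S.Countable ∧ S ⊆ {P : Ideal R | P.IsPrime ∧ L < P} ∧
          sInf S = L))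
    ∧
    ((∀ (L : Ideal R) [L.IsPrime],
        ∃ S : Set (Localization.AtPrime L), S.Countable ∧ Submodule.span R S = ⊤) ↔
      (∀ L : Ideal R, L.IsPrime →
        ∃ S : Set (FractionRing (R ⧸ L)), S.Countable ∧ Submodule.span (R ⧸ L) S = ⊤)) :=
  ⟨loc_iff_vcond.trans vcond_iff_inter, loc_iff_vcond.trans frac_iff_vcond.symm⟩
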